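/- Let a, b, c, n be integers with a ≠ 0 and n ≥ 2, let q(x) = a·x² + b·x + c, let r = gcd(a, n), let k be the multiplicity of 2 in n/r, and write n = 2^k·r·m with m odd. Define M = m if k = 0, 1, or 2, and M = 2^{k−2}·m if k ≥ 3. Then IQF is valid for q(x) ≡ 0 (mod n) if and only if {x ∈ ℤ : q(x) ≡ 0 (mod M)} = {x ∈ ℤ : q(x) ≡ 0 (mod n)}. -/

import Mathlib

lemma aux_dvd (a n r m : ℤ) (k : ℕ) (ha : a ≠ 0) (hn : 2 ≤ n)
    (hr : r = Int.gcd a n) (hnm : n = 2 ^ k * r * m) (hmodd : Odd m) (y : ℤ) :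
    (if k ≤ 2 then m else 2 ^ (k - 2) * m) ∣ y ↔ n ∣ 4 * a * y := by
  have hn0 : (0:ℤ) < n := by linarith
  have hr0 : (0:ℤ) < r := by
    rw [hr]
    exact_mod_cast Int.gcd_pos_iff.mpr (Or.inl ha)
  have hra : r ∣ a := hr ▸ Int.gcd_dvd_left a n
  have hrn : r ∣ n := hr ▸ Int.gcd_dvd_right a n
  obtain ⟨a', haa⟩ := hra
  obtain ⟨n', hnn⟩ := hrn
  have hn'eq : n' = 2 ^ k * m := by
    have h : r * n' = r * (2 ^ k * m) := by rw [← hnn, hnm]; ring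
    exact mul_left_cancel₀ hr0.ne' h
  have hcop : IsCoprime n' a' := by
    have h1 : a / r = a' := by rw [haa]; exact Int.mul_ediv_cancel_left _ hr0.ne'
    have h2 : n / r = n' := by rw [hnn]; exact Int.mul_ediv_cancel_left _ hr0.ne'
    have hg : Int.gcd (a / r) (n / r) = 1 := by
      rw [hr]
      exact Int.gcd_div_gcd_div_gcd (Int.gcd_pos_iff.mpr (Or.inl ha))
    rw [h1, h2] at hg
    exact (Int.isCoprime_iff_gcd_eq_one.mpr (Int.gcd_comm a' n' ▸ hg))
  have hc2m : IsCoprime (2:ℤ) m := by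
    obtain ⟨t, ht⟩ := hmodd
    exact ⟨-t, 1, by linarith⟩
  constructor
  · intro hMy
    -- suffices to show n ∣ 4*a*M
    have key : n ∣ 4 * a * (if k ≤ 2 then m else 2 ^ (k - 2) * m) := by
      split_ifs with hk2
      · refine ⟨2 ^ (2 - k) * a', ?_⟩
        have h4 : (4:ℤ) = 2 ^ k * 2 ^ (2 - k) := by
          rw [← pow_add]
          norm_num [Nat.add_sub_cancel' hk2]
        rw [hnm, haa, h4]; ring
      · refine ⟨a', ?_⟩
        have h4 : (4:ℤ) * 2 ^ (k - 2) = 2 ^ k := by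
          have : (4:ℤ) = 2 ^ 2 := by norm_num
          rw [this, ← pow_add]
          congr 1
          omega
        rw [hnm, haa, ← h4]; ring
    obtain ⟨z, hz⟩ := hMy
    rw [hz, show 4 * a * ((if k ≤ 2 then m else 2 ^ (k - 2) * m) * z)
        = 4 * a * (if k ≤ 2 then m else 2 ^ (k - 2) * m) * z by ring]
    exact key.mul_right z
  · intro hny
    have h1 : n' ∣ 4 * a' * y := by
      have h : r * n' ∣ r * (4 * a' * y) := by
        rw [← hnn, show r * (4 * a' * y) = 4 * (r * a') * y by ring, ← haa]
        exact hny
      exact (mul_dvd_mul_iff_left hr0.ne').mp h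
    have h2 : n' ∣ a' * (4 * y) := by rw [show a' * (4 * y) = 4 * a' * y by ring]; exact h1
    have h3 : (2:ℤ) ^ k * m ∣ 4 * y := hn'eq ▸ hcop.dvd_of_dvd_mul_left h2
    have hm4y : m ∣ 4 * y := dvd_trans (dvd_mul_left m (2 ^ k)) h3
    have hmy : m ∣ y := by
      have hc : IsCoprime m ((2:ℤ) ^ 2) := (hc2m.symm).pow_right
      have : m ∣ 2 ^ 2 * y := by rw [show ((2:ℤ) ^ 2) = 4 by norm_num]; exact hm4y
      exact hc.dvd_of_dvd_mul_left this
    split_ifs with hk2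
    · exact hmy
    · have h2k : (2:ℤ) ^ k ∣ 4 * y := dvd_trans (dvd_mul_right (2 ^ k) m) h3
      have h4 : (4:ℤ) * 2 ^ (k - 2) = 2 ^ k := by
        have : (4:ℤ) = 2 ^ 2 := by norm_num
        rw [this, ← pow_add]
        congr 1
        omega
      have h2k2 : (2:ℤ) ^ (k - 2) ∣ y := by
        have : (4:ℤ) * 2 ^ (k - 2) ∣ 4 * y := h4 ▸ h2k
        exact (mul_dvd_mul_iff_left (by norm_num : (4:ℤ) ≠ 0)).mp this
      exact (hc2m.pow_left).mul_dvd h2k2 hmy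

/-- The intermediate form of the quadratic formula (IQF) is valid for
`a·x² + b·x + c ≡ 0 (mod n)`. -/
def IQF (a b c n : ℤ) : Prop :=
  ∀ x : ℤ, n ∣ a * x ^ 2 + b * x + c ↔
    ∃ s : ℤ, n ∣ s ^ 2 - (b ^ 2 - 4 * a * c) ∧ n ∣ 2 * a * x - (-b + s)

/-- The reduction `IQF ↔ Q = T` of Section 3 of the paper. -/
theorem iqf_iff_sets_eq (a b c n r m : ℤ) (k : ℕ) (ha : a ≠ 0) (hn : 2 ≤ n)
    (hr : r = Int.gcd a n) (hk : k = padicValInt 2 (n / r))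
    (hnm : n = 2 ^ k * r * m) (hmodd : Odd m) :
    IQF a b c n ↔
      {x : ℤ | (if k ≤ 2 then m else 2 ^ (k - 2) * m) ∣ a * x ^ 2 + b * x + c} =
        {x : ℤ | n ∣ a * x ^ 2 + b * x + c} := by
  have hiff : ∀ x : ℤ,
      (∃ s : ℤ, n ∣ s ^ 2 - (b ^ 2 - 4 * a * c) ∧ n ∣ 2 * a * x - (-b + s)) ↔
        n ∣ 4 * a * (a * x ^ 2 + b * x + c) := by
    intro x
    constructor
    · rintro ⟨s, h1, h2⟩
      have key : 4 * a * (a * x ^ 2 + b * x + c)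
          = (s ^ 2 - (b ^ 2 - 4 * a * c)) + (2 * a * x - (-b + s)) * (2 * a * x + b + s) := by
        ring
      rw [key]
      exact dvd_add h1 (h2.mul_right _)
    · intro h
      refine ⟨2 * a * x + b, ?_, ?_⟩
      · rw [show (2 * a * x + b) ^ 2 - (b ^ 2 - 4 * a * c)
            = 4 * a * (a * x ^ 2 + b * x + c) by ring]
        exact h
      · rw [show 2 * a * x - (-b + (2 * a * x + b)) = 0 by ring]
        exact dvd_zero n
  have haux := aux_dvd a n r m k ha hn hr hnm hmodd
  rw [Set.ext_iff]
  constructor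
  · intro hIQF x
    simp only [Set.mem_setOf_eq]
    rw [haux]
    rw [← hiff x]
    exact (hIQF x).symm
  · intro hset x
    have h := hset x
    simp only [Set.mem_setOf_eq] at h
    rw [haux, ← hiff x] at h
    exact h.symm
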